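/- Suppose P is tame and for each residue e mod h the limit a_1^{[e]} := lim_{n→∞, n≡e (h)} γ_{n−1}/γ_n exists (finite rational accumulation of period h). Then for every k ≥ 0, lim_{n→∞, n≡e (h)} γ_{n−k}/γ_n = a_1^{[e]} a_1^{[e−1]} ⋯ a_1^{[e−k+1]}. Consequently each limiting opposite series a^{[e]}(s) = ∑_k a_k^{[e]} s^k satisfies the semi-periodicity a_{mh+k}^{[e]} = A^m a_k^{[e]} where A := ∏_{i=0}^{h−1} a_1^{[i]}, and hence equals the rational function a^{[e]}(s) = A^{[e]}(s)/(1 − A s^h), where A^{[e]}(s) := ∑_{j=0}^{h−1} (∏_{i=1}^{j} a_1^{[e−i+1]}) s^j. -/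

import Mathlib

open Filter

/-- Tameness of a coefficient sequence: `γ n ≠ 0` and `u ≤ |γ (n-1) / γ n| ≤ v`
    for all `n ≥ N`. -/
def Tame (γ : ℕ → ℂ) (u v : ℝ) (N : ℕ) : Prop :=
  0 < u ∧ 0 < v ∧ (∀ n ≥ N, γ n ≠ 0) ∧
    ∀ n ≥ N + 1, u ≤ ‖γ (n - 1) / γ n‖ ∧ ‖γ (n - 1) / γ n‖ ≤ v

/-- The opposite polynomial `X_n(P) = ∑_{k=0}^n (γ_{n-k}/γ_n) s^k`, viewed as its
    coefficient sequence in `ℂ[[s]] ≅ (ℕ → ℂ)` with the product topology. -/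
noncomputable def oppPoly (γ : ℕ → ℂ) (n : ℕ) : ℕ → ℂ :=
  fun k => if k ≤ n then γ (n - k) / γ n else 0

/-- The space `Ω(P)` of opposite series: the set of cluster points of the sequence
    of opposite polynomials in the coefficientwise (product) topology. -/
def OmegaP (γ : ℕ → ℂ) : Set (ℕ → ℂ) :=
  {a | MapClusterPt a atTop (oppPoly γ)}

open Finset in
/-- A product over a full period of residues is independent of the starting residue. -/
lemma aux_prod_period (h : ℕ) (hpos : 0 < h) (a1 : ZMod h → ℂ) (e : ZMod h) :
    ∏ i ∈ range h, a1 (e - (i : ℕ)) = ∏ i ∈ range h, a1 (i : ℕ) := by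
  haveI : NeZero h := ⟨hpos.ne'⟩
  apply Finset.prod_nbij' (fun i => (e - (i : ℕ) : ZMod h).val)
    (fun i => (e - (i : ℕ) : ZMod h).val)
  · intro a _; exact mem_range.2 (ZMod.val_lt _)
  · intro a _; exact mem_range.2 (ZMod.val_lt _)
  · intro a ha
    rw [ZMod.natCast_rightInverse, sub_sub_cancel, ZMod.val_cast_of_lt (mem_range.1 ha)]
  · intro a ha
    rw [ZMod.natCast_rightInverse, sub_sub_cancel, ZMod.val_cast_of_lt (mem_range.1 ha)]
  · intro a _; rw [ZMod.natCast_rightInverse]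

open Finset in
/-- Shifting the product by a full period multiplies by `A`. -/
lemma aux_prod_shift (h : ℕ) (hpos : 0 < h) (a1 : ZMod h → ℂ) (e : ZMod h) (n : ℕ) :
    ∏ i ∈ range (h + n), a1 (e - (i : ℕ))
      = (∏ i ∈ range h, a1 (i : ℕ)) * ∏ i ∈ range n, a1 (e - (i : ℕ)) := by
  rw [prod_range_add, aux_prod_period h hpos]
  congr 1
  refine prod_congr rfl fun i _ => ?_
  congr 1
  push_cast
  rw [ZMod.natCast_self]
  ring

open Finset in
lemma aux_semiper (h : ℕ) (hpos : 0 < h) (a1 : ZMod h → ℂ) (e : ZMod h) (m k : ℕ) :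
    (∏ i ∈ range (m * h + k), a1 (e - (i : ℕ)))
      = (∏ i ∈ range h, a1 (i : ℕ)) ^ m * ∏ i ∈ range k, a1 (e - (i : ℕ)) := by
  induction m with
  | zero => simp
  | succ m ih =>
    have : (m + 1) * h + k = h + (m * h + k) := by ring
    rw [this, aux_prod_shift h hpos, ih, pow_succ]
    ring

lemma aux_val_sub_one (h : ℕ) (hpos : 0 < h) (e : ZMod h) :
    (e - 1).val = if e.val = 0 then h - 1 else e.val - 1 := by
  haveI : NeZero h := ⟨hpos.ne'⟩
  split_ifs with h0
  · have he : e = 0 := by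
      have := ZMod.natCast_rightInverse e
      rw [h0] at this; simpa using this.symm
    have : ((h - 1 : ℕ) : ZMod h) = e - 1 := by
      rw [he]
      have : ((h - 1 : ℕ) : ZMod h) + 1 = ((h : ℕ) : ZMod h) := by
        rw [← Nat.cast_succ]; congr 1; omega
      rw [ZMod.natCast_self] at this
      linear_combination this
    rw [← this, ZMod.val_cast_of_lt (by omega)]
  · have : ((e.val - 1 : ℕ) : ZMod h) = e - 1 := by
      have h2 : ((e.val - 1 : ℕ) : ZMod h) + 1 = ((e.val : ℕ) : ZMod h) := by
        rw [← Nat.cast_succ]; congr 1; omega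
      rw [ZMod.natCast_rightInverse e] at h2
      linear_combination h2
    rw [← this, ZMod.val_cast_of_lt (by have := ZMod.val_lt e; omega)]

lemma aux_shift_tendsto (h : ℕ) (hpos : 0 < h) (F : ℕ → ℂ) (L : ℂ) (e : ZMod h)
    (hyp : Tendsto (fun m => F ((e - 1).val + h * m)) atTop (nhds L)) :
    Tendsto (fun m => F (e.val + h * m - 1)) atTop (nhds L) := by
  haveI : NeZero h := ⟨hpos.ne'⟩
  set d : ℕ := if e.val = 0 then 1 else 0 with hd
  have comp : Tendsto (fun m => F ((e - 1).val + h * (m - d))) atTop (nhds L) :=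
    hyp.comp (tendsto_sub_atTop_nat d)
  refine comp.congr' ?_
  filter_upwards [eventually_ge_atTop 1] with m hm
  congr 1
  rw [aux_val_sub_one h hpos]
  have hm1 : h * m = h * (m - 1) + h := by
    conv_lhs => rw [show m = (m - 1) + 1 by omega]
    rw [Nat.mul_add, Nat.mul_one]
  by_cases h0 : e.val = 0
  · simp only [h0, hd, if_pos]
    omega
  · have hval := ZMod.val_lt e
    simp only [h0, hd, if_neg, ite_false, Nat.sub_zero]
    omega

open Finset in
lemma aux_part1 (γ : ℕ → ℂ) (N : ℕ) (hnz : ∀ n ≥ N, γ n ≠ 0)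
    (h : ℕ) (hpos : 0 < h) (a1 : ZMod h → ℂ)
    (hlim : ∀ e : ZMod h,
      Tendsto (fun m => γ (e.val + h * m - 1) / γ (e.val + h * m)) atTop (nhds (a1 e)))
    (k : ℕ) : ∀ e : ZMod h,
      Tendsto (fun m => γ (e.val + h * m - k) / γ (e.val + h * m)) atTop
        (nhds (∏ i ∈ range k, a1 (e - (i : ℕ)))) := by
  induction k with
  | zero =>
    intro e
    simp only [Nat.sub_zero, prod_range_zero]
    refine Tendsto.congr' ?_ tendsto_const_nhds
    filter_upwards [eventually_ge_atTop N] with m hm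
    have : e.val + h * m ≥ N :=
      le_trans (le_trans hm (Nat.le_mul_of_pos_left m hpos)) (Nat.le_add_left _ _)
    exact (div_self (hnz _ this)).symm
  | succ k ih =>
    intro e
    have key : ∏ i ∈ range (k + 1), a1 (e - (i : ℕ))
        = (∏ i ∈ range k, a1 ((e - 1) - (i : ℕ))) * a1 e := by
      rw [prod_range_succ']
      congr 1
      · refine prod_congr rfl fun i _ => ?_
        congr 1
        push_cast
        ring
      · simp
    rw [key]
    have hg : Tendsto (fun m => γ (e.val + h * m - 1 - k) / γ (e.val + h * m - 1))
        atTop (nhds (∏ i ∈ range k, a1 ((e - 1) - (i : ℕ)))) :=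
      aux_shift_tendsto h hpos (fun n => γ (n - k) / γ n) _ e (ih (e - 1))
    refine (hg.mul (hlim e)).congr' ?_
    filter_upwards [eventually_ge_atTop (N + 1)] with m hm
    set n := e.val + h * m with hn
    have hn1 : n ≥ N + 1 :=
      le_trans (le_trans hm (Nat.le_mul_of_pos_left m hpos)) (Nat.le_add_left _ _)
    have hb : γ (n - 1) ≠ 0 := hnz _ (by omega)
    have harg : n - 1 - k = n - (k + 1) := by omega
    rw [harg, div_mul_div_comm, mul_comm (γ (n - (k + 1))), mul_div_mul_left _ _ hb]

open Finset in
/-- Under finite rational accumulation of period `h`, the higher ratio limits are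
    products of the period-one limits, the limiting opposite series is
    semi-periodic, and it equals the rational function `A^{[e]}(s)/(1 - A sʰ)`. -/
theorem opposite_series_rational (γ : ℕ → ℂ) (u v : ℝ) (N : ℕ) (htame : Tame γ u v N)
    (h : ℕ) (hpos : 0 < h) (a1 : ZMod h → ℂ)
    (hlim : ∀ e : ZMod h,
      Tendsto (fun m => γ (e.val + h * m - 1) / γ (e.val + h * m)) atTop (nhds (a1 e))) :
    -- limits of higher ratios
    (∀ e : ZMod h, ∀ k : ℕ,
      Tendsto (fun m => γ (e.val + h * m - k) / γ (e.val + h * m)) atTop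
        (nhds (∏ i ∈ range k, a1 (e - (i : ℕ))))) ∧
    -- semi-periodicity of the coefficients
    (∀ e : ZMod h, ∀ m k : ℕ, k < h →
      (∏ i ∈ range (m * h + k), a1 (e - (i : ℕ)))
        = (∏ i ∈ range h, a1 (i : ℕ)) ^ m * ∏ i ∈ range k, a1 (e - (i : ℕ))) ∧
    -- the opposite series is the rational function A^{[e]}(s)/(1 - A s^h)
    (∀ e : ZMod h,
      (1 - PowerSeries.C (∏ i ∈ range h, a1 (i : ℕ)) * PowerSeries.X ^ h) *
          PowerSeries.mk (fun k => ∏ i ∈ range k, a1 (e - (i : ℕ)))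
        = PowerSeries.mk (fun j => if j < h then ∏ i ∈ range j, a1 (e - (i : ℕ)) else 0)) := by
  obtain ⟨-, -, hnz, -⟩ := htame
  refine ⟨fun e k => aux_part1 γ N hnz h hpos a1 hlim k e,
    fun e m k _ => aux_semiper h hpos a1 e m k, fun e => ?_⟩
  ext j
  rw [sub_mul, one_mul, map_sub, mul_right_comm, PowerSeries.coeff_mul_X_pow',
    PowerSeries.coeff_mk, PowerSeries.coeff_mk]
  rcases lt_or_ge j h with hj | hj
  · rw [if_neg (by omega), if_pos hj, sub_zero]
  · rw [if_pos hj, if_neg (by omega), PowerSeries.coeff_C_mul, PowerSeries.coeff_mk,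
      sub_eq_zero]
    have := aux_prod_shift h hpos a1 e (j - h)
    rwa [Nat.add_sub_cancel' hj] at this
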